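/- Let G be a finite simple undirected graph with eigenvalues λ_1 ≥ λ_2 ≥ ⋯ ≥ λ_n and spectral radius ρ = λ_1, and let m_k = Σ_{l=1}^n α_l λ_l^k be a spectral moment sequence of G with nonnegative weights α_l, where α_1 is the weight attached to λ_1. Assume α_1 > 0 and m_{2k} > 0 for a given k ≥ 1, and set r_0 = (m_{2k}/α_1)^{1/(2k)}. Then m_{2k}·r_0 + m_{2k+1} − 2·α_1·r_0^{2k+1} ≤ 0; consequently every real root r of Q(r) = m_{2k}·r + m_{2k+1} − 2·α_1·r^{2k+1} with r ≥ r_0 satisfies r = r_0 or does not exist above r_0, so the largest real root of Q is at most r_0 and the bound of Q improves the bound ρ^{2k} ≤ m_{2k}/α_1. -/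

import Mathlib

open Matrix Finset

/-- The tightness claim in Corollary 4.10 of the paper: with
`r₀ = (m_{2k}/α₁)^{1/(2k)}` one has `Q(r₀) ≤ 0` for
`Q(r) = m_{2k} r + m_{2k+1} - 2 α₁ r^{2k+1}`, and every real root of `Q` is at most
`r₀`; hence the implicit bound improves the bound `ρ^{2k} ≤ m_{2k}/α₁`. -/
theorem stmt_18 (n : ℕ) (hn : 1 ≤ n) (G : SimpleGraph (Fin n)) [DecidableRel G.Adj]
    (lam : Fin n → ℝ) (hlam : Antitone lam)
    (U : Matrix (Fin n) (Fin n) ℝ)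
    (hU : Uᵀ * U = 1)
    (hAU : G.adjMatrix ℝ * U = U * Matrix.diagonal lam)
    (rho : ℝ) (hrho : IsGreatest (Set.range fun l => |lam l|) rho)
    (α : Fin n → ℝ) (hα : ∀ l, 0 ≤ α l) (hα0 : 0 < α ⟨0, hn⟩)
    (m : ℕ → ℝ) (hm : ∀ k, m k = ∑ l, α l * lam l ^ k)
    (k : ℕ) (hk : 1 ≤ k) (hm2k : 0 < m (2 * k))
    (r0 : ℝ) (hr0 : r0 = (m (2 * k) / α ⟨0, hn⟩) ^ (1 / (2 * (k : ℝ)))) :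
    m (2 * k) * r0 + m (2 * k + 1) - 2 * α ⟨0, hn⟩ * r0 ^ (2 * k + 1) ≤ 0 ∧
    ∀ r : ℝ, m (2 * k) * r + m (2 * k + 1) - 2 * α ⟨0, hn⟩ * r ^ (2 * k + 1) = 0 →
      r ≤ r0 := by
  set i0 : Fin n := ⟨0, hn⟩ with hi0
  set a := α i0 with ha
  have hdiv : (0:ℝ) < m (2*k) / a := div_pos hm2k hα0
  have hr0pos : 0 < r0 := by
    rw [hr0]; exact Real.rpow_pos_of_pos hdiv _
  have hkR : (2 * (k:ℝ)) ≠ 0 := by positivity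
  have hr0pow : r0 ^ (2*k) = m (2*k) / a := by
    rw [hr0, ← Real.rpow_natCast _ (2*k), ← Real.rpow_mul hdiv.le]
    rw [show (1 / (2 * (k:ℝ))) * ((2*k : ℕ) : ℝ) = 1 by push_cast; field_simp]
    exact Real.rpow_one _
  -- trace zero
  have hUU : U * Uᵀ = 1 := mul_eq_one_comm.mp hU
  have hA : G.adjMatrix ℝ = U * Matrix.diagonal lam * Uᵀ := by
    calc G.adjMatrix ℝ = G.adjMatrix ℝ * (U * Uᵀ) := by rw [hUU, Matrix.mul_one]
    _ = (G.adjMatrix ℝ * U) * Uᵀ := by rw [Matrix.mul_assoc]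
    _ = U * Matrix.diagonal lam * Uᵀ := by rw [hAU]
  have htrA : Matrix.trace (G.adjMatrix ℝ) = 0 := by
    simp [Matrix.trace, Matrix.diag]
  have hsum0 : ∑ l, lam l = 0 := by
    have : Matrix.trace (U * Matrix.diagonal lam * Uᵀ) = ∑ l, lam l := by
      rw [Matrix.trace_mul_comm, ← Matrix.mul_assoc, hU, Matrix.one_mul,
        Matrix.trace_diagonal]
    rw [hA, this] at htrA
    exact htrA
  have hlam0 : 0 ≤ lam i0 := by
    by_contra h
    push_neg at h
    have hle : ∀ l ∈ Finset.univ, lam l ≤ lam i0 := by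
      intro l _
      exact hlam (Fin.le_def.mpr (Nat.zero_le _))
    have := Finset.sum_le_card_nsmul Finset.univ lam (lam i0) hle
    rw [Finset.card_univ, Fintype.card_fin, hsum0, nsmul_eq_mul] at this
    have hn' : (1:ℝ) ≤ (n:ℝ) := by exact_mod_cast hn
    nlinarith [this, h, hn']
  -- lam i0 ≤ r0
  have hterm : a * lam i0 ^ (2*k) ≤ m (2*k) := by
    rw [hm]
    exact Finset.single_le_sum (f := fun l => α l * lam l ^ (2*k))
      (fun l _ => mul_nonneg (hα l) (even_two_mul k |>.pow_nonneg _)) (Finset.mem_univ i0)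
  have hlam0r0 : lam i0 ≤ r0 := by
    by_contra h
    push_neg at h
    have : r0 ^ (2*k) < lam i0 ^ (2*k) := by
      apply pow_lt_pow_left₀ h hr0pos.le
      omega
    rw [hr0pow] at this
    have : m (2*k) < a * lam i0 ^ (2*k) := by
      rw [div_lt_iff₀ hα0] at this
      linarith [this]
    linarith
  -- key: m(2k+1) ≤ m(2k)*r0
  have hkey : m (2*k+1) ≤ m (2*k) * r0 := by
    rw [hm, hm, Finset.sum_mul]
    apply Finset.sum_le_sum
    intro l _
    have hpow : (0:ℝ) ≤ lam l ^ (2*k) := (even_two_mul k).pow_nonneg _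
    rcases le_or_gt 0 (lam l) with hl | hl
    · have hlr0 : lam l ≤ r0 := le_trans (hlam (show i0 ≤ l from Fin.le_def.mpr (Nat.zero_le _))) hlam0r0
      calc α l * lam l ^ (2*k+1) = α l * lam l ^ (2*k) * lam l := by ring
      _ ≤ α l * lam l ^ (2*k) * r0 := by
          apply mul_le_mul_of_nonneg_left hlr0 (mul_nonneg (hα l) hpow)
      _ = α l * lam l ^ (2*k) * r0 := rfl
    · have : lam l ^ (2*k+1) ≤ 0 := by
        apply le_of_lt
        exact (Odd.pow_neg ⟨k, by ring⟩ hl)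
      calc α l * lam l ^ (2*k+1) ≤ 0 := mul_nonpos_of_nonneg_of_nonpos (hα l) this
      _ ≤ α l * lam l ^ (2*k) * r0 := mul_nonneg (mul_nonneg (hα l) hpow) hr0pos.le
  have har0 : a * r0 ^ (2*k) = m (2*k) := by
    rw [hr0pow]; field_simp
  have hQ0 : m (2 * k) * r0 + m (2 * k + 1) - 2 * a * r0 ^ (2 * k + 1) ≤ 0 := by
    have : 2 * a * r0 ^ (2*k+1) = 2 * (a * r0 ^ (2*k)) * r0 := by ring
    rw [this, har0]
    linarith
  refine ⟨hQ0, ?_⟩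
  intro r hr
  by_contra h
  push_neg at h
  have hrpos : 0 < r := hr0pos.trans h
  have hpow : r0 ^ (2*k) < r ^ (2*k) := by
    apply pow_lt_pow_left₀ h hr0pos.le; omega
  have h1 : m (2*k) * r < a * r ^ (2*k) * r := by
    rw [← har0]
    have : a * r0 ^ (2*k) < a * r ^ (2*k) := by
      exact mul_lt_mul_of_pos_left hpow hα0
    exact mul_lt_mul_of_pos_right this hrpos
  have h2 : m (2*k+1) ≤ m (2*k) * r := by
    calc m (2*k+1) ≤ m (2*k) * r0 := hkey
    _ ≤ m (2*k) * r := by nlinarith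
  have : m (2 * k) * r + m (2 * k + 1) - 2 * a * r ^ (2 * k + 1) < 0 := by
    have : 2 * a * r ^ (2*k+1) = 2 * (a * r ^ (2*k) * r) := by ring
    rw [this]
    nlinarith
  linarith [hr, this]
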